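/- arXiv:1507.01061 — 2 statements merged into one kernel-verified Lean document; each statement's English description precedes it below -/
import Mathlib

section
/- Let C > 0. There exists C' > 0 depending only on C such that for every convex element K(a,b,ã,b̃) satisfying conditions (Δ1) and (D2) with constant C, either b̃/b ≥ 1/2, or the following holds: ã/a ≥ 1/2, the element K(b,a,b̃,ã) is the image of K(a,b,ã,b̃) under the isometric reflection (x,y) ↦ (y,x) of ℝ², and K(b,a,b̃,ã) is a convex element satisfying conditions (Δ1) and (D2) with constant C'. Consequently every convex element under [Δ1, D2] is the image under a rigid motion of a convex element under [Δ1, D2] (with comparable constants) whose ratio b̃/b is at least 1/2. -/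
noncomputable section

/-- The Euclidean plane. -/
abbrev E2 := EuclideanSpace ℝ (Fin 2)

/-- The point (x, y) of the Euclidean plane. -/
def pt2 (x y : ℝ) : E2 := WithLp.toLp 2 ![x, y]

/-- The quadrilateral `K(a,b,ta,tb)` with vertices `(0,0), (a,0), (ta,tb), (0,b)`. -/
def quadK (a b ta tb : ℝ) : Set E2 :=
  convexHull ℝ {pt2 0 0, pt2 a 0, pt2 ta tb, pt2 0 b}

/-- The sine of the interior angle α at `V4 = (0,b)` of the triangle with vertices
`V2 = (a,0)`, `V3 = (ta,tb)`, `V4 = (0,b)`. -/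
def sinAlpha (a b ta tb : ℝ) : ℝ :=
  Real.sin (EuclideanGeometry.angle (pt2 a 0) (pt2 0 b) (pt2 ta tb))

/-- The isometric reflection `(x, y) ↦ (y, x)` of the plane. -/
def swapMap (X : E2) : E2 := WithLp.toLp 2 ![X 1, X 0]

@[simp] lemma pt2_apply_zero (x y : ℝ) : pt2 x y 0 = x := rfl
@[simp] lemma pt2_apply_one (x y : ℝ) : pt2 x y 1 = y := rfl

lemma sin_angle_formula (X P Y : E2) :
    Real.sin (EuclideanGeometry.angle X P Y) * (‖X - P‖ * ‖Y - P‖) =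
      |(X 0 - P 0) * (Y 1 - P 1) - (X 1 - P 1) * (Y 0 - P 0)| := by
  rw [EuclideanGeometry.angle, vsub_eq_sub, vsub_eq_sub,
    InnerProductGeometry.sin_angle_mul_norm_mul_norm]
  have h : ∀ u v : E2, (inner ℝ u v : ℝ) = u 0 * v 0 + u 1 * v 1 := by
    intro u v
    simp [PiLp.inner_apply, Fin.sum_univ_two]; ring
  rw [h, h, h]
  rw [show ((X - P) 0 * (X - P) 0 + (X - P) 1 * (X - P) 1) *
      ((Y - P) 0 * (Y - P) 0 + (Y - P) 1 * (Y - P) 1) -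
      ((X - P) 0 * (Y - P) 0 + (X - P) 1 * (Y - P) 1) *
      ((X - P) 0 * (Y - P) 0 + (X - P) 1 * (Y - P) 1) =
      ((X 0 - P 0) * (Y 1 - P 1) - (X 1 - P 1) * (Y 0 - P 0)) ^ 2 by
    simp [PiLp.sub_apply]; ring]
  exact Real.sqrt_sq_eq_abs _

lemma norm_pt2_sub (x y x' y' : ℝ) :
    ‖pt2 x y - pt2 x' y'‖ = Real.sqrt ((x - x') ^ 2 + (y - y') ^ 2) := by
  rw [EuclideanSpace.norm_eq]
  congr 1
  simp [Fin.sum_univ_two, PiLp.sub_apply, Real.norm_eq_abs, sq_abs]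

/-- The coordinate swap as a linear map. -/
def swapLin : E2 →ₗ[ℝ] E2 where
  toFun := swapMap
  map_add' x y := by
    ext i
    fin_cases i <;> simp [swapMap, PiLp.add_apply]
  map_smul' c x := by
    ext i
    fin_cases i <;> simp [swapMap, PiLp.smul_apply]

lemma swap_pt2 (x y : ℝ) : swapMap (pt2 x y) = pt2 y x := by
  ext i; fin_cases i <;> rfl

lemma swap_image (a b ta tb : ℝ) :
    swapMap '' quadK a b ta tb = quadK b a tb ta := by
  have h : swapMap '' quadK a b ta tb
      = convexHull ℝ (swapMap '' {pt2 0 0, pt2 a 0, pt2 ta tb, pt2 0 b}) :=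
    swapLin.image_convexHull _
  rw [quadK] at h ⊢
  rw [h]
  congr 1
  rw [Set.image_insert_eq, Set.image_insert_eq, Set.image_insert_eq, Set.image_singleton,
    swap_pt2, swap_pt2, swap_pt2, swap_pt2]
  ext z
  simp only [Set.mem_insert_iff, Set.mem_singleton_iff]
  tauto

lemma sqrt_sq_add_sq_le (x y : ℝ) : Real.sqrt (x ^ 2 + y ^ 2) ≤ |x| + |y| := by
  rw [show |x| + |y| = Real.sqrt ((|x| + |y|) ^ 2) from
    (Real.sqrt_sq (by positivity)).symm]
  apply Real.sqrt_le_sqrt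
  nlinarith [abs_nonneg x, abs_nonneg y, sq_abs x, sq_abs y]

lemma abs_le_sqrt_sq_add_sq (x y : ℝ) : |x| ≤ Real.sqrt (x ^ 2 + y ^ 2) := by
  rw [← Real.sqrt_sq_eq_abs]
  apply Real.sqrt_le_sqrt
  nlinarith [sq_nonneg y]

lemma abs_le_sqrt_sq_add_sq' (x y : ℝ) : |y| ≤ Real.sqrt (x ^ 2 + y ^ 2) := by
  rw [← Real.sqrt_sq_eq_abs]
  apply Real.sqrt_le_sqrt
  nlinarith [sq_nonneg x]

set_option maxHeartbeats 1000000 in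
/-- Every convex element `K(a,b,ta,tb)` under [Δ1, D2] with constant `C` either has
`tb/b ≥ 1/2`, or the swapped element `K(b,a,tb,ta)` — the image of `K(a,b,ta,tb)` under the
reflection `(x,y) ↦ (y,x)` — is a convex element under [Δ1, D2] with a constant `C'`
depending only on `C`, and moreover `ta/a ≥ 1/2`. -/
theorem reflect_to_large_tb (C : ℝ) (hC : 0 < C) :
    ∃ C' : ℝ, 0 < C' ∧
      ∀ a b ta tb : ℝ, 0 < a → 0 < b → 0 < ta → 0 < tb →
        1 < ta / a + tb / b →
        ta / a ≤ C → tb / b ≤ C →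
        1 / C ≤ sinAlpha a b ta tb →
        (1 / 2 ≤ tb / b) ∨
          (1 / 2 ≤ ta / a ∧
            swapMap '' quadK a b ta tb = quadK b a tb ta ∧
            1 < tb / b + ta / a ∧
            tb / b ≤ C' ∧ ta / a ≤ C' ∧
            1 / C' ≤ sinAlpha b a tb ta) := by
  refine ⟨4 * C * (1 + C), by positivity, ?_⟩
  intro a b ta tb ha hb hta htb hconv hΔa hΔb hα
  by_cases hcase : 1 / 2 ≤ tb / b
  · exact Or.inl hcase
  right
  push_neg at hcase
  -- basic ratio facts
  have h12 : 1 / 2 ≤ ta / a := by linarith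
  have hta2 : a / 2 ≤ ta := by
    have := (le_div_iff₀ ha).mp h12; linarith
  have htb2 : tb ≤ b / 2 := by
    have := (div_lt_iff₀ hb).mp hcase; linarith
  have htaC : ta ≤ C * a := by
    have := (div_le_iff₀ ha).mp hΔa; linarith
  have htbC : tb ≤ C * b := by
    have := (div_le_iff₀ hb).mp hΔb; linarith
  -- the (doubled) area of the triangle
  set D : ℝ := ta * b + tb * a - a * b with hDdef
  have hD : 0 < D := by
    have h1 : 1 * (a * b) < (ta / a + tb / b) * (a * b) :=
      mul_lt_mul_of_pos_right hconv (by positivity)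
    have h2 : (ta / a + tb / b) * (a * b) = ta * b + tb * a := by
      field_simp
    rw [h2, one_mul] at h1
    rw [hDdef]; linarith
  -- norms
  set N : ℝ := Real.sqrt (a ^ 2 + b ^ 2) with hNdef
  set M : ℝ := Real.sqrt (ta ^ 2 + (tb - b) ^ 2) with hMdef
  set M' : ℝ := Real.sqrt (tb ^ 2 + (ta - a) ^ 2) with hM'def
  have hN : 0 < N := Real.sqrt_pos.mpr (by positivity)
  have hM : 0 < M := Real.sqrt_pos.mpr (by positivity)
  have hM' : 0 < M' := Real.sqrt_pos.mpr (by positivity)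
  -- the sine of α times the relevant norms equals D
  have hnorm1 : ‖pt2 a 0 - pt2 0 b‖ = N := by
    rw [norm_pt2_sub]; congr 1; ring
  have hnorm2 : ‖pt2 ta tb - pt2 0 b‖ = M := by
    rw [norm_pt2_sub]; congr 1; ring
  have hnorm1' : ‖pt2 b 0 - pt2 0 a‖ = N := by
    rw [norm_pt2_sub]; congr 1; ring
  have hnorm2' : ‖pt2 tb ta - pt2 0 a‖ = M' := by
    rw [norm_pt2_sub]; congr 1; ring
  have hsinα : sinAlpha a b ta tb * (N * M) = D := by
    rw [sinAlpha, ← hnorm1, ← hnorm2, sin_angle_formula]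
    simp only [pt2_apply_zero, pt2_apply_one]
    rw [abs_of_pos (by rw [show (a - 0) * (tb - b) - (0 - b) * (ta - 0) = D by ring]; exact hD)]
    ring
  have hsinβ : sinAlpha b a tb ta * (N * M') = D := by
    rw [sinAlpha, ← hnorm1', ← hnorm2', sin_angle_formula]
    simp only [pt2_apply_zero, pt2_apply_one]
    rw [abs_of_pos (by rw [show (b - 0) * (ta - a) - (0 - a) * (tb - 0) = D by ring]; exact hD)]
    ring
  -- hypothesis (D2) gives `N * M ≤ C * D`
  have hNM : N * M ≤ C * D := by
    have h1 : sinAlpha a b ta tb = D / (N * M) := by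
      rw [eq_div_iff (mul_pos hN hM).ne']; exact hsinα
    rw [h1, div_le_div_iff₀ hC (mul_pos hN hM)] at hα
    linarith
  -- bound `M'` above and `M` below
  have hM'le : M' ≤ (1 + C) * a + b / 2 := by
    have h1 : M' ≤ |tb| + |ta - a| := sqrt_sq_add_sq_le tb (ta - a)
    have h2 : |tb| = tb := abs_of_pos htb
    have h3 : |ta - a| ≤ (1 + C) * a := by
      rw [abs_le]; constructor <;> nlinarith
    linarith
  have hMge1 : a / 2 ≤ M := by
    have := abs_le_sqrt_sq_add_sq ta (tb - b)
    rw [abs_of_pos hta] at this; linarith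
  have hMge2 : b / 2 ≤ M := by
    have := abs_le_sqrt_sq_add_sq' ta (tb - b)
    rw [abs_of_nonpos (by linarith : tb - b ≤ 0)] at this
    linarith
  have hM'M : M' ≤ 4 * (1 + C) * M := by
    have e1 : (1 + C) * a ≤ (1 + C) * (2 * M) :=
      mul_le_mul_of_nonneg_left (by linarith) (by linarith)
    have e3 : 0 ≤ (2 * C + 1) * M := mul_nonneg (by linarith) hM.le
    have e4 : (1 + C) * (2 * M) + M + (2 * C + 1) * M = 4 * (1 + C) * M := by ring
    linarith
  -- conclude the sine bound for the swapped element
  have hfinal : 1 / (4 * C * (1 + C)) ≤ sinAlpha b a tb ta := by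
    have h1 : sinAlpha b a tb ta = D / (N * M') := by
      rw [eq_div_iff (mul_pos hN hM').ne']; exact hsinβ
    rw [h1, div_le_div_iff₀ (by positivity) (mul_pos hN hM')]
    have h2 : N * M' ≤ N * (4 * (1 + C) * M) :=
      mul_le_mul_of_nonneg_left hM'M hN.le
    have h3 : N * (4 * (1 + C) * M) = 4 * (1 + C) * (N * M) := by ring
    have h4 : 4 * (1 + C) * (N * M) ≤ 4 * (1 + C) * (C * D) :=
      mul_le_mul_of_nonneg_left hNM (by positivity)
    have h5 : 4 * (1 + C) * (C * D) = D * (4 * C * (1 + C)) := by ring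
    linarith
  have hCC : C ≤ 4 * C * (1 + C) := by nlinarith [mul_pos hC hC]
  exact ⟨h12, swap_image a b ta tb, by linarith, le_trans hΔb hCC, le_trans hΔa hCC, hfinal⟩
end
end

section
/- Let k ≥ 2 be an integer and C > 0. There exists a constant C' > 0 depending only on k and C such that for every convex element K = K(a,b,ã,b̃) satisfying with constant C either both conditions (D1) and (D2), or all three conditions (Δ1), (D2) and (D3), and for all integers 1 ≤ i,j ≤ k−1, with M_{ij} = F_K(j/k, i/k), M_{i0} = (0, b·i/k) and M_{0j} = (a·j/k, 0): (a) a/C' ≤ ‖M_{ij} − M_{i0}‖ ≤ C'·a, b/C' ≤ ‖M_{ij} − M_{0j}‖ ≤ C'·b, and h/C' ≤ ‖M_{i0} − M_{0j}‖ ≤ C'·h where h = diam K; (b) the angle α_{ij} at M_{i0} between the vectors M_{ij} − M_{i0} and M_{0j} − M_{i0} satisfies sin α_{ij} ≥ 1/C'. -/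
noncomputable section

/-- The bilinear map `F_K` of `K(a,b,ta,tb)`, valued in the Euclidean plane. -/
def FKpt (a b ta tb x y : ℝ) : E2 :=
  pt2 (a * x * (1 - y) + ta * x * y) (b * y * (1 - x) + tb * x * y)


lemma pt2_sub (x y x' y' : ℝ) : pt2 x y - pt2 x' y' = pt2 (x - x') (y - y') := by
  ext i; fin_cases i <;> simp [pt2]

lemma norm_pt2 (x y : ℝ) : ‖pt2 x y‖ = Real.sqrt (x^2 + y^2) := by
  rw [EuclideanSpace.norm_eq]
  simp [pt2, Fin.sum_univ_two, sq_abs]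

lemma inner_pt2 (x y x' y' : ℝ) : (inner ℝ (pt2 x y) (pt2 x' y') : ℝ) = x * x' + y * y' := by
  simp [pt2, PiLp.inner_apply, Fin.sum_univ_two, RCLike.inner_apply]; ring

lemma le_sqrt_add (A B : ℝ) (hA : 0 ≤ A) : A ≤ Real.sqrt (A^2 + B^2) := by
  have h := Real.sqrt_le_sqrt (show A^2 ≤ A^2 + B^2 by nlinarith [sq_nonneg B])
  rwa [Real.sqrt_sq hA] at h

lemma sqrt_add_le (A B : ℝ) : Real.sqrt (A^2 + B^2) ≤ |A| + |B| := by
  have h : A^2 + B^2 ≤ (|A|+|B|)^2 := by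
    nlinarith [sq_abs A, sq_abs B, mul_nonneg (abs_nonneg A) (abs_nonneg B)]
  calc Real.sqrt (A^2+B^2) ≤ Real.sqrt ((|A|+|B|)^2) := Real.sqrt_le_sqrt h
    _ = |A|+|B| := Real.sqrt_sq (by positivity)

lemma sin_angle_pt2 (x1 y1 x2 y2 : ℝ) (h1 : 0 < x1^2 + y1^2) (h2 : 0 < x2^2 + y2^2) :
    Real.sin (InnerProductGeometry.angle (pt2 x1 y1) (pt2 x2 y2)) =
      |x1 * y2 - y1 * x2| / (Real.sqrt (x1^2+y1^2) * Real.sqrt (x2^2+y2^2)) := by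
  have hn1 : (0:ℝ) < Real.sqrt (x1^2+y1^2) := Real.sqrt_pos.2 h1
  have hn2 : (0:ℝ) < Real.sqrt (x2^2+y2^2) := Real.sqrt_pos.2 h2
  have hs1 : Real.sqrt (x1^2+y1^2) ^ 2 = x1^2+y1^2 := Real.sq_sqrt h1.le
  have hs2 : Real.sqrt (x2^2+y2^2) ^ 2 = x2^2+y2^2 := Real.sq_sqrt h2.le
  rw [InnerProductGeometry.angle, Real.sin_arccos, inner_pt2, norm_pt2, norm_pt2]
  have key : 1 - ((x1*x2+y1*y2)/(Real.sqrt (x1^2+y1^2) * Real.sqrt (x2^2+y2^2)))^2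
      = (|x1 * y2 - y1 * x2| / (Real.sqrt (x1^2+y1^2) * Real.sqrt (x2^2+y2^2)))^2 := by
    rw [div_pow, div_pow, sq_abs, mul_pow, hs1, hs2]
    field_simp
    ring
  rw [key, Real.sqrt_sq (by positivity)]

lemma sinAlpha_formula (a b ta tb : ℝ) (ha : 0 < a) (hb : 0 < b) (hta : 0 < ta)
    (hconv : a*b < b*ta + a*tb) :
    sinAlpha a b ta tb = (b*ta + a*tb - a*b) /
      (Real.sqrt (a^2 + b^2) * Real.sqrt (ta^2 + (tb-b)^2)) := by
  have e1 : pt2 a 0 - pt2 0 b = pt2 a (-b) := by rw [pt2_sub]; norm_num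
  have e2 : pt2 ta tb - pt2 0 b = pt2 ta (tb - b) := by rw [pt2_sub]; norm_num
  rw [sinAlpha, EuclideanGeometry.angle, vsub_eq_sub, vsub_eq_sub, e1, e2,
    sin_angle_pt2 _ _ _ _ (by positivity) (by nlinarith [pow_pos hta 2, sq_nonneg (tb-b)])]
  rw [show a*(tb-b) - (-b)*ta = b*ta + a*tb - a*b from by ring,
    show a^2 + (-b)^2 = a^2 + b^2 from by ring,
    abs_of_pos (by linarith)]

lemma quadK_subset_ball (a b ta tb R : ℝ)
    (h1 : ‖pt2 a 0‖ ≤ R) (h2 : ‖pt2 ta tb‖ ≤ R) (h3 : ‖pt2 0 b‖ ≤ R) (hR : 0 ≤ R) :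
    quadK a b ta tb ⊆ Metric.closedBall 0 R := by
  apply convexHull_min _ (convex_closedBall 0 R)
  intro p hp
  simp only [Set.mem_insert_iff, Set.mem_singleton_iff] at hp
  rcases hp with rfl|rfl|rfl|rfl <;>
    simp only [Metric.mem_closedBall, dist_zero_right] <;>
    first
    | (rw [norm_pt2]; simpa using hR)
    | assumption

lemma dist_pt2 (x y x' y' : ℝ) :
    dist (pt2 x y) (pt2 x' y') = Real.sqrt ((x-x')^2 + (y-y')^2) := by
  rw [dist_eq_norm, pt2_sub, norm_pt2]

lemma mem_quadK_v1 (a b ta tb : ℝ) : pt2 0 0 ∈ quadK a b ta tb := by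
  unfold quadK; exact subset_convexHull ℝ _ (by simp)
lemma mem_quadK_v2 (a b ta tb : ℝ) : pt2 a 0 ∈ quadK a b ta tb := by
  unfold quadK; exact subset_convexHull ℝ _ (by simp)
lemma mem_quadK_v4 (a b ta tb : ℝ) : pt2 0 b ∈ quadK a b ta tb := by
  unfold quadK; exact subset_convexHull ℝ _ (by simp)

lemma diam_lower (a b ta tb R : ℝ) (ha : 0 ≤ a) (hb : 0 ≤ b)
    (hs : quadK a b ta tb ⊆ Metric.closedBall 0 R) :
    a ≤ Metric.diam (quadK a b ta tb) ∧ b ≤ Metric.diam (quadK a b ta tb) := by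
  have hbd : Bornology.IsBounded (quadK a b ta tb) :=
    (Metric.isBounded_closedBall (x := (0:E2)) (r := R)).subset hs
  constructor
  · have h := Metric.dist_le_diam_of_mem hbd (mem_quadK_v1 a b ta tb) (mem_quadK_v2 a b ta tb)
    rwa [dist_pt2, show ((0:ℝ)-a)^2+((0:ℝ)-0)^2 = a^2 from by ring, Real.sqrt_sq ha] at h
  · have h := Metric.dist_le_diam_of_mem hbd (mem_quadK_v1 a b ta tb) (mem_quadK_v4 a b ta tb)
    rwa [dist_pt2, show ((0:ℝ)-0)^2+((0:ℝ)-b)^2 = b^2 from by ring, Real.sqrt_sq hb] at h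

/-- The five uniform facts derived in either case. -/
lemma key_facts (C a b ta tb : ℝ) (hC : 0 < C) (ha : 0 < a) (hb : 0 < b)
    (hta : 0 < ta) (htb : 0 < tb) (hconv' : a*b < b*ta + a*tb)
    (hcase : (ta ≤ a ∧ tb ≤ b ∧ 1 / C ≤ sinAlpha a b ta tb) ∨
      (ta / a ≤ C ∧ tb / b ≤ C ∧ 1 / C ≤ sinAlpha a b ta tb ∧ a ≤ C * b ∧ b ≤ C * a)) :
    a ≤ C*b ∧ |b - tb| ≤ C*(C+1)*a ∧ |a - ta| ≤ C*(C+1)*b ∧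
      ta ≤ (C+1)*a ∧ tb ≤ (C+1)*b := by
  rcases hcase with ⟨h1, h2, hs⟩ | ⟨h1, h2, hs, h3, h4⟩
  · have hform := sinAlpha_formula a b ta tb ha hb hta hconv'
    rw [hform] at hs
    have hq2 : (0:ℝ) < ta^2 + (tb-b)^2 := by nlinarith [pow_pos hta 2, sq_nonneg (tb-b)]
    have hD0 : 0 < Real.sqrt (a^2+b^2) * Real.sqrt (ta^2+(tb-b)^2) :=
      mul_pos (Real.sqrt_pos.2 (by positivity)) (Real.sqrt_pos.2 hq2)
    have hDle : Real.sqrt (a^2+b^2) * Real.sqrt (ta^2+(tb-b)^2)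
        ≤ C * (b*ta + a*tb - a*b) := by
      have := (div_le_div_iff₀ hC hD0).1 hs
      linarith
    have hsa : a ≤ Real.sqrt (a^2+b^2) := le_sqrt_add a b ha.le
    have hsb : b ≤ Real.sqrt (a^2+b^2) := by
      rw [show a^2+b^2 = b^2+a^2 from by ring]; exact le_sqrt_add b a hb.le
    have hsta : ta ≤ Real.sqrt (ta^2+(tb-b)^2) := le_sqrt_add ta (tb-b) hta.le
    have hsbt : b - tb ≤ Real.sqrt (ta^2+(tb-b)^2) := by
      have h'' := le_sqrt_add (b-tb) ta (by linarith : (0:ℝ) ≤ b - tb)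
      rwa [show (b-tb)^2 + ta^2 = ta^2 + (tb-b)^2 from by ring] at h''
    have m1 : a * ta ≤ Real.sqrt (a^2+b^2) * Real.sqrt (ta^2+(tb-b)^2) :=
      mul_le_mul hsa hsta hta.le (Real.sqrt_nonneg _)
    have m2 : b*ta + a*tb - a*b ≤ b*ta := by
      linarith [mul_le_mul_of_nonneg_left h2 ha.le]
    have hiiA : a * ta ≤ C * b * ta := by
      linarith [m1, hDle, mul_le_mul_of_nonneg_left m2 hC.le]
    have hab : a ≤ C * b := le_of_mul_le_mul_right hiiA hta
    have m3 : b * (b - tb) ≤ Real.sqrt (a^2+b^2) * Real.sqrt (ta^2+(tb-b)^2) :=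
      mul_le_mul hsb hsbt (by linarith) (Real.sqrt_nonneg _)
    have m4 : b*ta + a*tb - a*b ≤ a*b := by
      linarith [mul_le_mul_of_nonneg_left h1 hb.le, mul_le_mul_of_nonneg_left h2 ha.le]
    have hiB : (b - tb) * b ≤ (C * a) * b := by
      linarith [m3, hDle, mul_le_mul_of_nonneg_left m4 hC.le]
    have hbtb : b - tb ≤ C * a := le_of_mul_le_mul_right hiB hb
    refine ⟨hab, ?_, ?_, by linarith [mul_pos hC ha], by linarith [mul_pos hC hb]⟩
    · rw [abs_of_nonneg (by linarith : (0:ℝ) ≤ b - tb)]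
      linarith [mul_pos (mul_pos hC hC) ha]
    · rw [abs_of_nonneg (by linarith : (0:ℝ) ≤ a - ta)]
      linarith [hab, mul_pos (mul_pos hC hC) hb]
  · have hta' : ta ≤ C*a := by rw [div_le_iff₀ ha] at h1; linarith
    have htb' : tb ≤ C*b := by rw [div_le_iff₀ hb] at h2; linarith
    refine ⟨h3, ?_, ?_, by linarith [ha], by linarith [hb]⟩
    · rw [abs_le]
      constructor
      · linarith [htb', mul_le_mul_of_nonneg_left h4 hC.le, mul_pos hC ha]
      · linarith [h4, htb, mul_nonneg (mul_nonneg hC.le hC.le) ha.le]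
    · rw [abs_le]
      constructor
      · linarith [hta', mul_le_mul_of_nonneg_left h3 hC.le, mul_pos hC hb]
      · linarith [h3, hta, mul_nonneg (mul_nonneg hC.le hC.le) hb.le]

lemma const_facts (kk C : ℝ) (hk2 : 2 ≤ kk) (hC : 0 < C) :
    kk^2 ≤ 4*kk^3*(C+2)^3 ∧ C^2+2*C+2 ≤ 4*kk^3*(C+2)^3 ∧
    4*kk*(C+2) ≤ 4*kk^3*(C+2)^3 ∧ (2:ℝ) ≤ 4*kk^3*(C+2)^3 ∧
    kk^3*(C+2)^2*(C+1) ≤ 4*kk^3*(C+2)^3 := by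
  have hkpos : (0:ℝ) < kk := by linarith
  have hC8 : (8:ℝ) ≤ (C+2)^3 := by nlinarith [mul_pos (mul_pos hC hC) hC, mul_pos hC hC]
  have hk4 : (4:ℝ) ≤ kk^2 := by nlinarith
  have hk8 : (8:ℝ) ≤ kk^3 := by
    nlinarith [mul_nonneg (sub_nonneg.2 hk2) (sq_nonneg kk), hk4]
  have hk3 : 2*kk^2 ≤ kk^3 := by
    nlinarith [mul_nonneg (sq_nonneg kk) (sub_nonneg.2 hk2)]
  have hkk3 : kk ≤ kk^3 := by
    nlinarith [mul_nonneg (mul_nonneg hkpos.le (by linarith : (0:ℝ) ≤ kk-1))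
      (by linarith : (0:ℝ) ≤ kk+1)]
  have hCC3 : (C+2) ≤ (C+2)^3 := by
    nlinarith [mul_nonneg (mul_nonneg (by linarith : (0:ℝ) ≤ C+2)
      (by linarith : (0:ℝ) ≤ C+1)) (by linarith : (0:ℝ) ≤ C+3)]
  refine ⟨?_, ?_, ?_, ?_, ?_⟩
  · nlinarith [mul_le_mul hk3 hC8 (by norm_num) (by positivity), sq_nonneg kk]
  · nlinarith [mul_le_mul hk8 hC8 (by norm_num) (by positivity), sq_nonneg (C+2)]
  · nlinarith [mul_le_mul hkk3 hCC3 (by positivity) (by positivity)]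
  · nlinarith [mul_le_mul hk8 hC8 (by norm_num) (by positivity)]
  · nlinarith [mul_pos (pow_pos hkpos 3)
      (mul_pos (pow_pos (by linarith : (0:ℝ) < C+2) 2) (by linarith : (0:ℝ) < 3*C+7))]

/-- Bounds for the triangle side `M_ij - M_i0` (and by symmetry `M_ij - M_0j`). -/
lemma claim1_bounds (C' kk C a b ta tb x y : ℝ)
    (hC : 0 < C) (hkk : 0 < kk) (ha : 0 < a) (hta : 0 < ta)
    (hx1 : 1/kk ≤ x) (hx3 : x ≤ 1) (hy0 : 0 < y) (h1y : 1/kk ≤ 1 - y) (hy3 : y ≤ 1)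
    (htaa : ta ≤ (C+1)*a) (hbtb : |b - tb| ≤ C*(C+1)*a)
    (hCk1 : kk^2 ≤ C') (hCup : C^2+2*C+2 ≤ C') (hC' : 0 < C') :
    a / C' ≤ Real.sqrt ((a*x*(1-y)+ta*x*y)^2 + (x*y*(tb-b))^2) ∧
    Real.sqrt ((a*x*(1-y)+ta*x*y)^2 + (x*y*(tb-b))^2) ≤ (C^2+2*C+2) * a ∧
    Real.sqrt ((a*x*(1-y)+ta*x*y)^2 + (x*y*(tb-b))^2) ≤ C' * a := by
  have hx0 : 0 < x := lt_of_lt_of_le (by positivity) hx1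
  have h1y0 : (0:ℝ) ≤ 1 - y := le_trans (by positivity) h1y
  have hN0 := Real.sqrt_nonneg ((a*x*(1-y)+ta*x*y)^2 + (x*y*(tb-b))^2)
  have hA0 : 0 < a*x*(1-y)+ta*x*y := by
    linarith [mul_pos (mul_pos hta hx0) hy0,
      mul_nonneg (mul_nonneg ha.le hx0.le) h1y0]
  have hAlow : a/kk^2 ≤ a*x*(1-y)+ta*x*y := by
    have h1 : (1/kk)*(1/kk) ≤ x*(1-y) := mul_le_mul hx1 h1y (by positivity) hx0.le
    have h2 : a*((1/kk)*(1/kk)) ≤ a*(x*(1-y)) := mul_le_mul_of_nonneg_left h1 ha.le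
    have h3 : a*((1/kk)*(1/kk)) = a/kk^2 := by field_simp
    rw [h3] at h2
    linarith [mul_pos (mul_pos hta hx0) hy0]
  have hNlow : a/kk^2 ≤ Real.sqrt ((a*x*(1-y)+ta*x*y)^2 + (x*y*(tb-b))^2) :=
    le_trans hAlow (le_sqrt_add _ _ hA0.le)
  have hxy1 : x*y ≤ 1 := mul_le_one₀ hx3 hy0.le hy3
  have q1 : a*x*(1-y) ≤ a := by
    linarith [mul_nonneg (mul_nonneg ha.le hx0.le) hy0.le,
      mul_le_mul_of_nonneg_left hx3 ha.le]
  have q2 : ta*x*y ≤ (C+1)*a := by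
    linarith [mul_le_mul_of_nonneg_left hxy1 hta.le]
  have hBabs : |x*y*(tb-b)| ≤ C*(C+1)*a := by
    rw [show x*y*(tb-b) = (x*y)*(tb-b) from by ring, abs_mul,
      abs_of_pos (mul_pos hx0 hy0)]
    calc (x*y) * |tb-b| ≤ 1 * |tb-b| := mul_le_mul_of_nonneg_right hxy1 (abs_nonneg _)
      _ = |tb-b| := one_mul _
      _ = |b-tb| := abs_sub_comm _ _
      _ ≤ C*(C+1)*a := hbtb
  have hup := sqrt_add_le (a*x*(1-y)+ta*x*y) (x*y*(tb-b))
  rw [abs_of_pos hA0] at hup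
  have hNup : Real.sqrt ((a*x*(1-y)+ta*x*y)^2 + (x*y*(tb-b))^2) ≤ (C^2+2*C+2)*a := by
    linarith [hBabs, hup]
  refine ⟨?_, hNup, by linarith [mul_le_mul_of_nonneg_right hCup ha.le]⟩
  rw [div_le_iff₀ hC']
  have h5 : a ≤ Real.sqrt ((a*x*(1-y)+ta*x*y)^2 + (x*y*(tb-b))^2) * kk^2 :=
    (div_le_iff₀ (by positivity)).1 hNlow
  linarith [mul_le_mul_of_nonneg_left hCk1 hN0]

/-- Bounds for the hypotenuse `M_i0 - M_0j` against the diameter. -/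
lemma claim3_bounds (C' kk C a b d x y : ℝ)
    (hC : 0 < C) (hkk : 0 < kk) (ha : 0 < a) (hb : 0 < b)
    (hx1 : 1/kk ≤ x) (hx3 : x ≤ 1) (hy1 : 1/kk ≤ y) (hy3 : y ≤ 1)
    (hd1 : a ≤ d) (hd2 : b ≤ d) (hdub : d ≤ 2*((C+2)*(a+b)))
    (hCk3 : 4*kk*(C+2) ≤ C') (hCk4 : (2:ℝ) ≤ C') (hC' : 0 < C') :
    d / C' ≤ Real.sqrt ((a*x)^2+(b*y)^2) ∧ Real.sqrt ((a*x)^2+(b*y)^2) ≤ C' * d := by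
  have hx0 : 0 < x := lt_of_lt_of_le (by positivity) hx1
  have hy0 : 0 < y := lt_of_lt_of_le (by positivity) hy1
  have hN0 := Real.sqrt_nonneg ((a*x)^2+(b*y)^2)
  have hNx : a*x ≤ Real.sqrt ((a*x)^2+(b*y)^2) := le_sqrt_add _ _ (mul_pos ha hx0).le
  have hNy : b*y ≤ Real.sqrt ((a*x)^2+(b*y)^2) := by
    have h := le_sqrt_add (b*y) (a*x) (mul_pos hb hy0).le
    rwa [show (b*y)^2+(a*x)^2 = (a*x)^2+(b*y)^2 from by ring] at h
  have hkx : 1 ≤ x*kk := (div_le_iff₀ hkk).1 hx1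
  have hky : 1 ≤ y*kk := (div_le_iff₀ hkk).1 hy1
  have hak : a ≤ kk * Real.sqrt ((a*x)^2+(b*y)^2) := by
    linarith [mul_le_mul_of_nonneg_left hkx ha.le,
      mul_le_mul_of_nonneg_right hNx hkk.le]
  have hbk : b ≤ kk * Real.sqrt ((a*x)^2+(b*y)^2) := by
    linarith [mul_le_mul_of_nonneg_left hky hb.le,
      mul_le_mul_of_nonneg_right hNy hkk.le]
  have hd0 : (0:ℝ) ≤ d := le_trans ha.le hd1
  constructor
  · rw [div_le_iff₀ hC']
    linarith [hdub, mul_le_mul_of_nonneg_right hCk3 hN0,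
      mul_le_mul_of_nonneg_left (add_le_add hak hbk) (show (0:ℝ) ≤ 2*(C+2) by positivity)]
  · have h1 := sqrt_add_le (a*x) (b*y)
    rw [abs_of_pos (mul_pos ha hx0), abs_of_pos (mul_pos hb hy0)] at h1
    linarith [mul_le_mul_of_nonneg_right hCk4 hd0,
      mul_le_mul_of_nonneg_left hx3 ha.le, mul_le_mul_of_nonneg_left hy3 hb.le]

/-- Key positivity of the cross product of the node triangle. -/
lemma Tbound (a b ta tb x y t : ℝ) (ha : 0 < a) (hb : 0 < b) (hta : 0 < ta) (htb : 0 < tb)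
    (hconv : a*b < b*ta + a*tb) (hx0 : 0 < x) (hy0 : 0 < y)
    (hxt : x ≤ t) (hyt : y ≤ t) :
    a*x*(b-tb) + b*y*(a-ta) ≤ t*(a*b) := by
  have ht0 : (0:ℝ) ≤ t := le_trans hx0.le hxt
  rcases le_or_gt tb b with h1 | h1 <;> rcases le_or_gt ta a with h2 | h2
  · nlinarith [mul_nonneg (mul_nonneg (sub_nonneg.2 hxt) ha.le) (sub_nonneg.2 h1),
      mul_nonneg (mul_nonneg (sub_nonneg.2 hyt) hb.le) (sub_nonneg.2 h2),
      mul_le_mul_of_nonneg_left (show 2*(a*b) - (b*ta + a*tb) ≤ a*b from by linarith) ht0]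
  · nlinarith [mul_nonneg (mul_nonneg (sub_nonneg.2 hxt) ha.le) (sub_nonneg.2 h1),
      mul_pos (mul_pos hb hy0) (sub_pos.2 h2),
      mul_le_mul_of_nonneg_left (show a*(b-tb) ≤ a*b from by nlinarith) ht0]
  · nlinarith [mul_nonneg (mul_nonneg (sub_nonneg.2 hyt) hb.le) (sub_nonneg.2 h2),
      mul_pos (mul_pos ha hx0) (sub_pos.2 h1),
      mul_le_mul_of_nonneg_left (show b*(a-ta) ≤ a*b from by nlinarith) ht0]
  · nlinarith [mul_pos (mul_pos ha hx0) (sub_pos.2 h1),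
      mul_pos (mul_pos hb hy0) (sub_pos.2 h2),
      mul_nonneg ht0 (mul_pos ha hb).le]

lemma de2_bound (C a b x y : ℝ) (ha : 0 < a) (hb : 0 < b) (hx0 : 0 < x) (hx3 : x ≤ 1)
    (hy0 : 0 < y) (hy3 : y ≤ 1) (hab : a ≤ C*b) :
    Real.sqrt ((a*x)^2+(b*y)^2) ≤ (C+1)*b := by
  have h1 := sqrt_add_le (a*x) (b*y)
  rw [abs_of_pos (mul_pos ha hx0), abs_of_pos (mul_pos hb hy0)] at h1
  linarith [mul_le_mul_of_nonneg_left hx3 ha.le, mul_le_mul_of_nonneg_left hy3 hb.le]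

lemma nr_bound (kk a b x y T : ℝ) (hkk : 0 < kk) (hx1 : 1/kk ≤ x) (hy1 : 1/kk ≤ y)
    (hx0 : 0 < x) (hy0 : 0 < y) (hT : a*b/kk ≤ T) (hab : 0 < a*b) :
    a*b ≤ kk^3*(x*y*T) := by
  have s1 : (1/kk)*(1/kk) ≤ x*y := mul_le_mul hx1 hy1 (by positivity) hx0.le
  have s2 : ((1/kk)*(1/kk))*(a*b/kk) ≤ (x*y)*T :=
    mul_le_mul s1 hT (by positivity) (mul_nonneg hx0.le hy0.le)
  have e : ((1/kk)*(1/kk))*(a*b/kk) = a*b/kk^3 := by field_simp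
  rw [e] at s2
  have h := (div_le_iff₀ (pow_pos hkk 3)).1 s2
  linarith [h]

lemma claim4_bound (C' kk C a b De1 De2 Nr : ℝ)
    (hC : 0 < C) (hkk : 0 < kk) (ha : 0 < a) (hb : 0 < b)
    (hDe1 : 0 < De1) (hDe2 : 0 < De2) (hNr : 0 ≤ Nr)
    (hDe1le : De1 ≤ (C^2+2*C+2)*a) (hDe2le : De2 ≤ (C+1)*b)
    (habNr : a*b ≤ kk^3*Nr) (hCk5 : kk^3*(C+2)^2*(C+1) ≤ C') (hC' : 0 < C') :
    1/C' ≤ Nr / (De1 * De2) := by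
  rw [div_le_div_iff₀ hC' (mul_pos hDe1 hDe2), one_mul]
  calc De1*De2 ≤ ((C^2+2*C+2)*a)*((C+1)*b) :=
        mul_le_mul hDe1le hDe2le hDe2.le (by positivity)
    _ = (C^2+2*C+2)*(C+1)*(a*b) := by ring
    _ ≤ ((C+2)^2)*(C+1)*(a*b) := by
        linarith [mul_pos (mul_pos (show (0:ℝ) < 2*C+2 from by linarith)
          (show (0:ℝ) < C+1 from by linarith)) (mul_pos ha hb)]
    _ ≤ ((C+2)^2)*(C+1)*(kk^3*Nr) := by
        apply mul_le_mul_of_nonneg_left habNr (by positivity)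
    _ = (kk^3*(C+2)^2*(C+1))*Nr := by ring
    _ ≤ C'*Nr := mul_le_mul_of_nonneg_right hCk5 hNr
    _ = Nr*C' := by ring

set_option maxHeartbeats 1000000 in
/-- Geometry of the triangles attached to interior interpolation nodes: for elements
under [(D1),(D2)] or [(Δ1),(D2),(D3)] with constant `C`, the node `M_{ij} = F_K(j/k,i/k)`
satisfies `‖M_{ij}−M_{i0}‖ ∼ a`, `‖M_{ij}−M_{0j}‖ ∼ b`, `‖M_{i0}−M_{0j}‖ ∼ h`, and the
angle `α_{ij}` at `M_{i0}` between `M_{ij}−M_{i0}` and `M_{0j}−M_{i0}` has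
`sin α_{ij} ≥ 1/C'`. -/
theorem interior_node_triangles (k : ℕ) (hk : 2 ≤ k) (C : ℝ) (hC : 0 < C) :
    ∃ C' : ℝ, 0 < C' ∧
      ∀ a b ta tb : ℝ, 0 < a → 0 < b → 0 < ta → 0 < tb →
        1 < ta / a + tb / b →
        ((ta ≤ a ∧ tb ≤ b ∧ 1 / C ≤ sinAlpha a b ta tb) ∨
          (ta / a ≤ C ∧ tb / b ≤ C ∧ 1 / C ≤ sinAlpha a b ta tb ∧
            a ≤ C * b ∧ b ≤ C * a)) →
        ∀ i j : ℕ, 1 ≤ i → i ≤ k - 1 → 1 ≤ j → j ≤ k - 1 →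
          (a / C' ≤ ‖FKpt a b ta tb ((j:ℝ)/k) ((i:ℝ)/k) - pt2 0 (b * i / k)‖ ∧
            ‖FKpt a b ta tb ((j:ℝ)/k) ((i:ℝ)/k) - pt2 0 (b * i / k)‖ ≤ C' * a) ∧
          (b / C' ≤ ‖FKpt a b ta tb ((j:ℝ)/k) ((i:ℝ)/k) - pt2 (a * j / k) 0‖ ∧
            ‖FKpt a b ta tb ((j:ℝ)/k) ((i:ℝ)/k) - pt2 (a * j / k) 0‖ ≤ C' * b) ∧
          (Metric.diam (quadK a b ta tb) / C' ≤ ‖pt2 0 (b * i / k) - pt2 (a * j / k) 0‖ ∧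
            ‖pt2 0 (b * i / k) - pt2 (a * j / k) 0‖ ≤
              C' * Metric.diam (quadK a b ta tb)) ∧
          1 / C' ≤ Real.sin (InnerProductGeometry.angle
              (FKpt a b ta tb ((j:ℝ)/k) ((i:ℝ)/k) - pt2 0 (b * i / k))
              (pt2 (a * j / k) 0 - pt2 0 (b * i / k))) := by
  have hk2 : (2:ℝ) ≤ (k:ℝ) := by exact_mod_cast hk
  have hkpos : (0:ℝ) < (k:ℝ) := by linarith
  obtain ⟨hCk1, hCup, hCk3, hCk4, hCk5⟩ := const_facts (k:ℝ) C hk2 hC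
  refine ⟨4 * (k:ℝ)^3 * (C+2)^3, by positivity, ?_⟩
  set C' := 4 * (k:ℝ)^3 * (C+2)^3 with hC'def
  have hC' : (0:ℝ) < C' := by positivity
  intro a b ta tb ha hb hta htb hconv hcase i j hi1 hik hj1 hjk
  -- convexity in product form
  have hconv' : a*b < b*ta + a*tb := by
    have h1 : ta/a + tb/b = (b*ta + a*tb)/(a*b) := by field_simp
    rw [h1, lt_div_iff₀ (by positivity)] at hconv; linarith
  -- coordinates
  set x := (j:ℝ)/(k:ℝ) with hxdef
  set y := (i:ℝ)/(k:ℝ) with hydef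
  have hj1' : (1:ℝ) ≤ (j:ℝ) := by exact_mod_cast hj1
  have hi1' : (1:ℝ) ≤ (i:ℝ) := by exact_mod_cast hi1
  have hjk' : (j:ℝ) + 1 ≤ (k:ℝ) := by exact_mod_cast (by omega : j + 1 ≤ k)
  have hik' : (i:ℝ) + 1 ≤ (k:ℝ) := by exact_mod_cast (by omega : i + 1 ≤ k)
  have hx1 : 1/(k:ℝ) ≤ x := by
    rw [hxdef, div_le_div_iff₀ hkpos hkpos]
    exact mul_le_mul_of_nonneg_right hj1' hkpos.le
  have hy1 : 1/(k:ℝ) ≤ y := by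
    rw [hydef, div_le_div_iff₀ hkpos hkpos]
    exact mul_le_mul_of_nonneg_right hi1' hkpos.le
  have hx2 : x ≤ 1 - 1/(k:ℝ) := by
    rw [hxdef, div_le_iff₀ hkpos]
    have h : (1 - 1/(k:ℝ)) * k = k - 1 := by field_simp
    rw [h]; linarith
  have hy2 : y ≤ 1 - 1/(k:ℝ) := by
    rw [hydef, div_le_iff₀ hkpos]
    have h : (1 - 1/(k:ℝ)) * k = k - 1 := by field_simp
    rw [h]; linarith
  have hik0 : (0:ℝ) < 1/(k:ℝ) := by positivity
  have hx0 : 0 < x := lt_of_lt_of_le hik0 hx1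
  have hy0 : 0 < y := lt_of_lt_of_le hik0 hy1
  have hx3 : x ≤ 1 := by linarith
  have hy3 : y ≤ 1 := by linarith
  have h1y : 1/(k:ℝ) ≤ 1 - y := by linarith
  have h1x : 1/(k:ℝ) ≤ 1 - x := by linarith
  obtain ⟨hab, hbtb, hata, htaa, htbb⟩ :=
    key_facts C a b ta tb hC ha hb hta htb hconv' hcase
  -- coordinate rewrites
  have hby : b * (i:ℝ) / (k:ℝ) = b * y := by rw [hydef, mul_div_assoc]
  have hax : a * (j:ℝ) / (k:ℝ) = a * x := by rw [hxdef, mul_div_assoc]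
  have e1 : FKpt a b ta tb x y - pt2 0 (b * (i:ℝ) / (k:ℝ))
      = pt2 (a*x*(1-y)+ta*x*y) (x*y*(tb-b)) := by
    rw [show FKpt a b ta tb x y
        = pt2 (a*x*(1-y)+ta*x*y) (b*y*(1-x)+tb*x*y) from rfl, pt2_sub, hby]
    congr 1 <;> ring
  have e2 : FKpt a b ta tb x y - pt2 (a * (j:ℝ) / (k:ℝ)) 0
      = pt2 (x*y*(ta-a)) (b*y*(1-x)+tb*x*y) := by
    rw [show FKpt a b ta tb x y
        = pt2 (a*x*(1-y)+ta*x*y) (b*y*(1-x)+tb*x*y) from rfl, pt2_sub, hax]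
    congr 1 <;> ring
  have e3 : pt2 0 (b * (i:ℝ) / (k:ℝ)) - pt2 (a * (j:ℝ) / (k:ℝ)) 0
      = pt2 (-(a*x)) (b*y) := by
    rw [pt2_sub, hby, hax]
    congr 1 <;> ring
  have e4 : pt2 (a * (j:ℝ) / (k:ℝ)) 0 - pt2 0 (b * (i:ℝ) / (k:ℝ))
      = pt2 (a*x) (-(b*y)) := by
    rw [pt2_sub, hby, hax]
    congr 1 <;> ring
  -- norm formulas
  have n1 : ‖FKpt a b ta tb x y - pt2 0 (b * (i:ℝ) / (k:ℝ))‖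
      = Real.sqrt ((a*x*(1-y)+ta*x*y)^2 + (x*y*(tb-b))^2) := by rw [e1, norm_pt2]
  have n2 : ‖FKpt a b ta tb x y - pt2 (a * (j:ℝ) / (k:ℝ)) 0‖
      = Real.sqrt ((x*y*(ta-a))^2 + (b*y*(1-x)+tb*x*y)^2) := by rw [e2, norm_pt2]
  have n3 : ‖pt2 0 (b * (i:ℝ) / (k:ℝ)) - pt2 (a * (j:ℝ) / (k:ℝ)) 0‖
      = Real.sqrt ((a*x)^2 + (b*y)^2) := by
    rw [e3, norm_pt2, show (-(a*x))^2 + (b*y)^2 = (a*x)^2 + (b*y)^2 from by ring]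
  -- diameter bounds
  have hna : ‖pt2 a 0‖ ≤ (C+2)*(a+b) := by
    rw [norm_pt2, show a^2+(0:ℝ)^2 = a^2 from by ring, Real.sqrt_sq ha.le]
    linarith [mul_pos hC ha, mul_pos hC hb]
  have hnb : ‖pt2 0 b‖ ≤ (C+2)*(a+b) := by
    rw [norm_pt2, show (0:ℝ)^2+b^2 = b^2 from by ring, Real.sqrt_sq hb.le]
    linarith [mul_pos hC ha, mul_pos hC hb]
  have hnt : ‖pt2 ta tb‖ ≤ (C+2)*(a+b) := by
    rw [norm_pt2]
    have h1 := sqrt_add_le ta tb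
    rw [abs_of_pos hta, abs_of_pos htb] at h1
    linarith [htaa, htbb, mul_pos hC ha, mul_pos hC hb]
  have hsubK : quadK a b ta tb ⊆ Metric.closedBall 0 ((C+2)*(a+b)) :=
    quadK_subset_ball a b ta tb _ hna hnt hnb (by positivity)
  obtain ⟨hd1, hd2⟩ := diam_lower a b ta tb _ ha.le hb.le hsubK
  have hdub : Metric.diam (quadK a b ta tb) ≤ 2*((C+2)*(a+b)) :=
    le_trans (Metric.diam_mono hsubK Metric.isBounded_closedBall)
      (Metric.diam_closedBall (by positivity))
  -- claims 1 and 2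
  obtain ⟨c1a, c1b, c1c⟩ := claim1_bounds C' (k:ℝ) C a b ta tb x y
    hC hkpos ha hta hx1 hx3 hy0 h1y hy3 htaa hbtb hCk1 hCup hC'
  obtain ⟨c2a, c2b, c2c⟩ := claim1_bounds C' (k:ℝ) C b a tb ta y x
    hC hkpos hb htb hy1 hy3 hx0 h1x hx3 htbb hata hCk1 hCup hC'
  rw [show (b*y*(1-x)+tb*y*x)^2 + (y*x*(ta-a))^2
      = (x*y*(ta-a))^2 + (b*y*(1-x)+tb*x*y)^2 from by ring] at c2a c2c
  obtain ⟨c3a, c3b⟩ := claim3_bounds C' (k:ℝ) C a b (Metric.diam (quadK a b ta tb)) x y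
    hC hkpos ha hb hx1 hx3 hy1 hy3 hd1 hd2 hdub hCk3 hCk4 hC'
  refine ⟨⟨by rw [n1]; exact c1a, by rw [n1]; exact c1c⟩,
    ⟨by rw [n2]; exact c2a, by rw [n2]; exact c2c⟩,
    ⟨by rw [n3]; exact c3a, by rw [n3]; exact c3b⟩, ?_⟩
  -- claim 4 : the angle
  have hA0 : 0 < a*x*(1-y)+ta*x*y := by
    have h1 : 0 < ta*x*y := mul_pos (mul_pos hta hx0) hy0
    have h2 : 0 ≤ a*x*(1-y) :=
      mul_nonneg (mul_nonneg ha.le hx0.le) (by linarith)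
    linarith
  have h1pos : 0 < (a*x*(1-y)+ta*x*y)^2 + (x*y*(tb-b))^2 := by
    have := pow_pos hA0 2
    have := sq_nonneg (x*y*(tb-b))
    linarith
  have h2pos : 0 < (a*x)^2 + (-(b*y))^2 := by
    have := pow_pos (mul_pos ha hx0) 2
    have := sq_nonneg (-(b*y))
    linarith
  rw [e1, e4, sin_angle_pt2 _ _ _ _ h1pos h2pos]
  -- cross product
  have hTb := Tbound a b ta tb x y (1 - 1/(k:ℝ)) ha hb hta htb hconv' hx0 hy0 hx2 hy2
  have hT' : a*b/(k:ℝ) ≤ a*b - (a*x*(b-tb) + b*y*(a-ta)) := by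
    have h : (1 - 1/(k:ℝ))*(a*b) = a*b - (a*b)/(k:ℝ) := by ring
    rw [h] at hTb
    linarith
  have hTpos : 0 < a*b - (a*x*(b-tb) + b*y*(a-ta)) :=
    lt_of_lt_of_le (by positivity) hT'
  have hnum : (a*x*(1-y)+ta*x*y)*(-(b*y)) - (x*y*(tb-b))*(a*x)
      = -(x*y*(a*b - (a*x*(b-tb) + b*y*(a-ta)))) := by ring
  rw [hnum, abs_neg, abs_of_pos (mul_pos (mul_pos hx0 hy0) hTpos),
    show (a*x)^2 + (-(b*y))^2 = (a*x)^2 + (b*y)^2 from by ring]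
  exact claim4_bound C' (k:ℝ) C a b _ _ _ hC hkpos ha hb
    (Real.sqrt_pos.2 h1pos) (Real.sqrt_pos.2 (by positivity))
    (by positivity) c1b
    (de2_bound C a b x y ha hb hx0 hx3 hy0 hy3 hab)
    (nr_bound (k:ℝ) a b x y _ hkpos hx1 hy1 hx0 hy0 hT' (mul_pos ha hb))
    hCk5 hC'
end
end
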